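/- Let X be an n-dimensional real Banach space and T ∈ B(X) with M_T = {±x₀} for some unit vector x₀, and suppose ker T contains a nonzero left symmetric point of X. Then either (I ⊥_B T and T ⊥_B I), where I is the identity operator, or T is not a right symmetric point of B(X). -/

import Mathlib

def BJOrth {X : Type*} [NormedAddCommGroup X] [NormedSpace ℝ X] (x y : X) : Prop :=
  ∀ lam : ℝ, ‖x + lam • y‖ ≥ ‖x‖

def OpBJOrth {X : Type*} [NormedAddCommGroup X] [NormedSpace ℝ X]
    (T A : X →L[ℝ] X) : Prop :=
  ∀ lam : ℝ, ‖T + lam • A‖ ≥ ‖T‖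

lemma exists_attain {X : Type*} [NormedAddCommGroup X] [NormedSpace ℝ X]
    [FiniteDimensional ℝ X] (S : X →L[ℝ] X) (x₀ : X) (hx₀ : ‖x₀‖ = 1) :
    ∃ x : X, ‖x‖ = 1 ∧ ‖S x‖ = ‖S‖ := by
  have hcomp : IsCompact (Metric.sphere (0:X) 1) := isCompact_sphere 0 1
  have hne : (Metric.sphere (0:X) 1).Nonempty :=
    ⟨x₀, by simpa [mem_sphere_zero_iff_norm] using hx₀⟩
  have hcont : ContinuousOn (fun x : X => ‖S x‖) (Metric.sphere (0:X) 1) :=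
    (S.continuous.norm).continuousOn
  obtain ⟨x, hxmem, hmax⟩ := hcomp.exists_isMaxOn hne hcont
  have hx1 : ‖x‖ = 1 := by simpa [mem_sphere_zero_iff_norm] using hxmem
  refine ⟨x, hx1, le_antisymm (by simpa [hx1] using S.le_opNorm x) ?_⟩
  refine S.opNorm_le_bound (norm_nonneg _) (fun y => ?_)
  rcases eq_or_ne y 0 with rfl | hy
  · simp
  · have hyn : ‖y‖ ≠ 0 := norm_ne_zero_iff.mpr hy
    have hz : (‖y‖⁻¹ • y) ∈ Metric.sphere (0:X) 1 := by
      simp [mem_sphere_zero_iff_norm, norm_smul, abs_of_nonneg (norm_nonneg y),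
        inv_mul_cancel₀ hyn]
    have := hmax hz
    have h2 : ‖S (‖y‖⁻¹ • y)‖ ≤ ‖S x‖ := this
    have h3 : ‖S (‖y‖⁻¹ • y)‖ = ‖y‖⁻¹ * ‖S y‖ := by
      rw [map_smul, norm_smul, Real.norm_eq_abs, abs_of_nonneg (by positivity)]
    rw [h3] at h2
    calc ‖S y‖ = ‖y‖ * (‖y‖⁻¹ * ‖S y‖) := by field_simp
    _ ≤ ‖y‖ * ‖S x‖ := by
        exact mul_le_mul_of_nonneg_left h2 (norm_nonneg y)
    _ = ‖S x‖ * ‖y‖ := mul_comm _ _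

lemma key_not_orth {X : Type*} [NormedAddCommGroup X] [NormedSpace ℝ X]
    [FiniteDimensional ℝ X] (T : X →L[ℝ] X) (x₀ : X) (hx₀ : ‖x₀‖ = 1)
    (huniq : ∀ x : X, ‖x‖ = 1 → ‖T x‖ = ‖T‖ → x = x₀ ∨ x = -x₀)
    (lam₀ : ℝ) (hlt : ‖T x₀ + lam₀ • x₀‖ < ‖T‖) :
    ¬ OpBJOrth T (ContinuousLinearMap.id ℝ X) := by
  intro hB
  set t : ℕ → ℝ := fun n => ((n : ℝ) + 1)⁻¹ with ht
  have htpos : ∀ n, 0 < t n := fun n => by positivity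
  have htle : ∀ n, t n ≤ 1 := fun n => by
    rw [ht]
    simp only
    rw [inv_le_one_iff₀]
    right; linarith [Nat.cast_nonneg (α := ℝ) n]
  have httend : Filter.Tendsto t Filter.atTop (nhds 0) := by
    simpa [ht, one_div] using (tendsto_one_div_add_atTop_nhds_zero_nat :
      Filter.Tendsto (fun n : ℕ => 1 / ((n : ℝ) + 1)) Filter.atTop (nhds 0))
  choose x hx1 hx2 using fun n =>
    exists_attain (T + (t n * lam₀) • ContinuousLinearMap.id ℝ X) x₀ hx₀
  -- key inequality: ‖T (x n) + lam₀ • x n‖ ≥ ‖T‖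
  have key : ∀ n, ‖T‖ ≤ ‖T (x n) + lam₀ • (x n)‖ := by
    intro n
    have h1 : ‖T‖ ≤ ‖T (x n) + (t n * lam₀) • (x n)‖ := by
      have := hB (t n * lam₀)
      calc ‖T‖ ≤ ‖T + (t n * lam₀) • ContinuousLinearMap.id ℝ X‖ := this
      _ = ‖T (x n) + (t n * lam₀) • (x n)‖ := by
          rw [← hx2 n]; simp
    have hident : T (x n) + (t n * lam₀) • (x n)
        = (1 - t n) • (T (x n)) + (t n) • (T (x n) + lam₀ • (x n)) := by
      rw [smul_add, smul_smul]
      rw [sub_smul, one_smul]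
      abel
    have h2 : ‖T (x n) + (t n * lam₀) • (x n)‖
        ≤ (1 - t n) * ‖T (x n)‖ + t n * ‖T (x n) + lam₀ • (x n)‖ := by
      rw [hident]
      calc _ ≤ ‖(1 - t n) • (T (x n))‖ + ‖(t n) • (T (x n) + lam₀ • (x n))‖ :=
            norm_add_le _ _
      _ = (1 - t n) * ‖T (x n)‖ + t n * ‖T (x n) + lam₀ • (x n)‖ := by
          rw [norm_smul, norm_smul, Real.norm_eq_abs, Real.norm_eq_abs,
            abs_of_nonneg (by linarith [htle n]), abs_of_nonneg (le_of_lt (htpos n))]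
    have h3 : ‖T (x n)‖ ≤ ‖T‖ := by simpa [hx1 n] using T.le_opNorm (x n)
    nlinarith [htpos n, htle n]
  -- compactness
  have hmem : ∀ n, x n ∈ Metric.sphere (0:X) 1 := fun n => by
    simpa [mem_sphere_zero_iff_norm] using hx1 n
  obtain ⟨z, hz, φ, hφ, hφtend⟩ := (isCompact_sphere (0:X) 1).tendsto_subseq hmem
  have hz1 : ‖z‖ = 1 := by simpa [mem_sphere_zero_iff_norm] using hz
  have httend' : Filter.Tendsto (fun n => t (φ n)) Filter.atTop (nhds 0) :=
    httend.comp hφ.tendsto_atTop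
  -- limit of ‖T x_{φ n} + t_{φ n} lam₀ x_{φ n}‖ is ‖T z‖ ≥ ‖T‖
  have hTcont : Filter.Tendsto (fun n => ‖T (x (φ n)) + (t (φ n) * lam₀) • (x (φ n))‖)
      Filter.atTop (nhds ‖T z‖) := by
    have h1 : Filter.Tendsto (fun n => T (x (φ n))) Filter.atTop (nhds (T z)) :=
      (T.continuous.tendsto z).comp hφtend
    have h2 : Filter.Tendsto (fun n => (t (φ n) * lam₀) • (x (φ n)))
        Filter.atTop (nhds (((0:ℝ) * lam₀) • z)) :=
      Filter.Tendsto.smul (httend'.mul_const lam₀) hφtend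
    rw [zero_mul, zero_smul] at h2
    have := (h1.add h2).norm
    simpa using this
  have hTz : ‖T z‖ = ‖T‖ := by
    have hle : ‖T z‖ ≤ ‖T‖ := by simpa [hz1] using T.le_opNorm z
    have hge : ‖T‖ ≤ ‖T z‖ := by
      refine ge_of_tendsto hTcont (Filter.Eventually.of_forall fun n => ?_)
      calc ‖T‖ ≤ ‖T + (t (φ n) * lam₀) • ContinuousLinearMap.id ℝ X‖ := hB _
      _ = ‖T (x (φ n)) + (t (φ n) * lam₀) • (x (φ n))‖ := by rw [← hx2 (φ n)]; simp
    linarith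
  -- limit of ‖T x_{φ n} + lam₀ x_{φ n}‖ is ‖T z + lam₀ z‖ ≥ ‖T‖
  have hlim2 : Filter.Tendsto (fun n => ‖T (x (φ n)) + lam₀ • (x (φ n))‖)
      Filter.atTop (nhds ‖T z + lam₀ • z‖) := by
    have h1 : Filter.Tendsto (fun n => T (x (φ n))) Filter.atTop (nhds (T z)) :=
      (T.continuous.tendsto z).comp hφtend
    exact (h1.add (hφtend.const_smul lam₀)).norm
  have hge2 : ‖T‖ ≤ ‖T z + lam₀ • z‖ :=
    ge_of_tendsto hlim2 (Filter.Eventually.of_forall fun n => key (φ n))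
  rcases huniq z hz1 hTz with rfl | rfl
  · linarith
  · have : ‖T (-x₀) + lam₀ • (-x₀)‖ = ‖T x₀ + lam₀ • x₀‖ := by
      rw [map_neg, smul_neg, ← neg_add, norm_neg]
    rw [this] at hge2
    linarith

theorem identity_orth_or_not_right_symmetric {X : Type*} [NormedAddCommGroup X]
    [NormedSpace ℝ X] [FiniteDimensional ℝ X]
    (T : X →L[ℝ] X) (x₀ : X) (hx₀ : ‖x₀‖ = 1)
    (hMT : {x : X | ‖x‖ = 1 ∧ ‖T x‖ = ‖T‖} = {x₀, -x₀})
    (hker : ∃ u : X, u ≠ 0 ∧ T u = 0 ∧ (∀ y : X, BJOrth u y → BJOrth y u)) :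
    (OpBJOrth (ContinuousLinearMap.id ℝ X) T ∧ OpBJOrth T (ContinuousLinearMap.id ℝ X)) ∨
      ¬ (∀ A : X →L[ℝ] X, OpBJOrth A T → OpBJOrth T A) := by
  obtain ⟨u, hu0, hTu, -⟩ := hker
  have hx₀M : ‖T x₀‖ = ‖T‖ := by
    have : x₀ ∈ {x : X | ‖x‖ = 1 ∧ ‖T x‖ = ‖T‖} := by
      rw [hMT]; left; rfl
    exact this.2
  have hidnorm : ‖(ContinuousLinearMap.id ℝ X)‖ = 1 := by
    refine le_antisymm (ContinuousLinearMap.norm_id_le) ?_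
    have := (ContinuousLinearMap.id ℝ X).le_opNorm x₀
    simpa [hx₀] using this
  -- I ⊥_B T always, via the unit vector in ker T
  have hun : ‖u‖ ≠ 0 := norm_ne_zero_iff.mpr hu0
  set v : X := ‖u‖⁻¹ • u with hv
  have hv1 : ‖v‖ = 1 := by
    rw [hv, norm_smul, Real.norm_eq_abs, abs_of_nonneg (by positivity),
      inv_mul_cancel₀ hun]
  have hTv : T v = 0 := by rw [hv, map_smul, hTu, smul_zero]
  have hIT : OpBJOrth (ContinuousLinearMap.id ℝ X) T := by
    intro lam
    have heval : (ContinuousLinearMap.id ℝ X + lam • T) v = v := by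
      simp [hTv]
    calc ‖ContinuousLinearMap.id ℝ X‖ = 1 := hidnorm
    _ = ‖(ContinuousLinearMap.id ℝ X + lam • T) v‖ := by rw [heval, hv1]
    _ ≤ ‖ContinuousLinearMap.id ℝ X + lam • T‖ * ‖v‖ :=
        ContinuousLinearMap.le_opNorm _ _
    _ = ‖ContinuousLinearMap.id ℝ X + lam • T‖ := by rw [hv1, mul_one]
  by_cases hc : BJOrth (T x₀) x₀
  · left
    refine ⟨hIT, fun lam => ?_⟩
    calc ‖T‖ = ‖T x₀‖ := hx₀M.symm
    _ ≤ ‖T x₀ + lam • x₀‖ := hc lam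
    _ = ‖(T + lam • ContinuousLinearMap.id ℝ X) x₀‖ := by simp
    _ ≤ ‖T + lam • ContinuousLinearMap.id ℝ X‖ * ‖x₀‖ :=
        ContinuousLinearMap.le_opNorm _ _
    _ = ‖T + lam • ContinuousLinearMap.id ℝ X‖ := by rw [hx₀, mul_one]
  · right
    intro hrs
    have hTI : OpBJOrth T (ContinuousLinearMap.id ℝ X) := hrs _ hIT
    simp only [BJOrth, not_forall, not_le] at hc
    obtain ⟨lam₀, hlam₀⟩ := hc
    rw [hx₀M] at hlam₀
    have huniq : ∀ x : X, ‖x‖ = 1 → ‖T x‖ = ‖T‖ → x = x₀ ∨ x = -x₀ := by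
      intro x h1 h2
      have : x ∈ ({x₀, -x₀} : Set X) := by rw [← hMT]; exact ⟨h1, h2⟩
      simpa using this
    exact key_not_orth T x₀ hx₀ huniq lam₀ hlam₀ hTI
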